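/- Maximum likelihood estimation and marginalization commute (Theorem 2): Let C be a finite collection of nonempty subsets of S, q ∈ C, and A_q its 1-neighborhood. Let p̃ be a probability distribution on configurations whose marginal p̃_{A_q∖q} is strictly positive, define p̂(x) = p̃_{A_q}(x_{A_q})·p̃_{S∖q}(x_{S∖q}) / p̃_{A_q∖q}(x_{A_q∖q}), and let F be the set of all positive Gibbs distributions over C. Assume p̂ ∈ F. If p* ∈ F maximizes the expected log-likelihood p ↦ Σ_x p̃(x)·log p(x) over F, then the marginal of p* on A_q equals p̃_{A_q}, which is itself a maximum likelihood estimate for p̃_{A_q} in the family { r_{A_q} : r ∈ F } of marginals of members of F. -/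
import Mathlib
set_option linter.unusedSectionVars false
set_option maxHeartbeats 1000000


open Finset

/-- A potential `E` on the subset `c` of sites: a real-valued function of
configurations that depends only on the coordinates in `c`. -/
def DependsOnlyOn {S : Type*} {V : S → Type*} (c : Finset S) (E : (∀ s, V s) → ℝ) : Prop :=
  ∀ x y : ∀ s, V s, (∀ s ∈ c, x s = y s) → E x = E y

/-- A potential is normalized with respect to zero if it vanishes on every
configuration having a zero coordinate inside `c`. -/
def NormalizedZero {S : Type*} {V : S → Type*} [∀ s, Zero (V s)] (c : Finset S)
    (E : (∀ s, V s) → ℝ) : Prop :=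
  ∀ x : ∀ s, V s, (∃ t ∈ c, x t = 0) → E x = 0

/-- The marginal of `p` on `U`: `p_U(y) = Σ { p x : x_U = y }`. -/
def marginal {S : Type*} {V : S → Type*} [Fintype S] [DecidableEq S]
    [∀ s, Fintype (V s)] [∀ s, DecidableEq (V s)]
    (p : (∀ s, V s) → ℝ) (U : Finset S) (y : ∀ s : U, V s) : ℝ :=
  ∑ x ∈ Finset.univ.filter (fun x : ∀ s, V s => ∀ s : U, x s.1 = y s), p x

/-- `p` is a (positive, normalized) Gibbs distribution over the clique system `C`:
`p x = (1/Z) exp (−Σ_{c ∈ C} E_c(x_c))` for some partition constant `Z > 0` and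
potentials `E_c` depending only on the coordinates in `c`, and `p` sums to one. -/
def IsGibbsDistribution {S : Type*} {V : S → Type*} [Fintype S] [DecidableEq S]
    [∀ s, Fintype (V s)] (C : Finset (Finset S)) (p : (∀ s, V s) → ℝ) : Prop :=
  ∃ (E : Finset S → (∀ s, V s) → ℝ) (Z : ℝ), 0 < Z ∧
    (∀ c ∈ C, DependsOnlyOn c (E c)) ∧
    (∀ x, p x = (1 / Z) * Real.exp (-(∑ c ∈ C, E c x))) ∧
    (∑ x, p x = 1)

section Aux
variable {S : Type*} [Fintype S] [DecidableEq S] {V : S → Type*}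
  [∀ s, Fintype (V s)] [∀ s, DecidableEq (V s)]


noncomputable def extFun [∀ s, Nonempty (V s)] (U : Finset S) (y : ∀ s : U, V s) :
    ∀ s, V s := fun s => if h : s ∈ U then y ⟨s, h⟩ else Classical.arbitrary (V s)

lemma extFun_mem [∀ s, Nonempty (V s)] (U : Finset S) (y : ∀ s : U, V s) {s : S}
    (hs : s ∈ U) : extFun U y s = y ⟨s, hs⟩ := by simp [extFun, hs]

lemma sum_marginal_mul (p : (∀ s, V s) → ℝ) (U : Finset S) (F : (∀ s : U, V s) → ℝ) :
    ∑ y, marginal p U y * F y = ∑ x, p x * F (U.restrict x) := by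
  classical
  rw [← Finset.sum_fiberwise Finset.univ (fun x : ∀ s, V s => U.restrict x)
    (fun x => p x * F (U.restrict x))]
  refine Finset.sum_congr rfl fun y _ => ?_
  rw [marginal, Finset.sum_mul]
  refine Finset.sum_congr ?_ fun x hx => ?_
  · apply Finset.filter_congr; intro x _
    constructor
    · intro h; funext s; exact h s
    · intro h s; rw [← h]; rfl
  · simp only [Finset.mem_filter] at hx
    rw [hx.2]

lemma sum_marginal (p : (∀ s, V s) → ℝ) (U : Finset S) :
    ∑ y, marginal p U y = ∑ x, p x := by
  have := sum_marginal_mul p U (fun _ => 1)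
  simpa using this

lemma marginal_nonneg {p : (∀ s, V s) → ℝ} (hp : ∀ x, 0 ≤ p x) (U : Finset S)
    (y : ∀ s : U, V s) : 0 ≤ marginal p U y :=
  Finset.sum_nonneg fun x _ => hp x

lemma marginal_pos [∀ s, Nonempty (V s)] {p : (∀ s, V s) → ℝ} (hp : ∀ x, 0 < p x)
    (U : Finset S) (y : ∀ s : U, V s) : 0 < marginal p U y :=
  Finset.sum_pos (fun x _ => hp x)
    ⟨extFun U y, Finset.mem_filter.mpr ⟨Finset.mem_univ _, fun s => dif_pos s.2⟩⟩

lemma sum_mul_eq_of_marginal_eq [∀ s, Nonempty (V s)] (p p' : (∀ s, V s) → ℝ)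
    (U : Finset S) (f : (∀ s, V s) → ℝ)
    (hm : ∀ y, marginal p U y = marginal p' U y) (hf : DependsOnlyOn U f) :
    ∑ x, p x * f x = ∑ x, p' x * f x := by
  have hfx : ∀ x : ∀ s, V s, f x = f (extFun U (U.restrict x)) := by
    intro x
    refine hf _ _ fun s hs => ?_
    simp [extFun, hs, Finset.restrict]
  calc ∑ x, p x * f x = ∑ x, p x * (fun y => f (extFun U y)) (U.restrict x) :=
        Finset.sum_congr rfl fun x _ => congrArg (p x * ·) (hfx x)
    _ = ∑ y, marginal p U y * (fun y => f (extFun U y)) y :=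
        (sum_marginal_mul p U (fun y => f (extFun U y))).symm
    _ = ∑ y, marginal p' U y * (fun y => f (extFun U y)) y := by simp_rw [hm]
    _ = ∑ x, p' x * (fun y => f (extFun U y)) (U.restrict x) :=
        sum_marginal_mul p' U (fun y => f (extFun U y))
    _ = ∑ x, p' x * f x := Finset.sum_congr rfl fun x _ => (congrArg (p' x * ·) (hfx x)).symm

lemma swapcollapse (p : (∀ s, V s) → ℝ) (U W D : Finset S)
    (hUW : ∀ s, s ∈ U ∨ s ∈ W) (hD : ∀ s, s ∈ D ↔ s ∈ U ∧ s ∈ W) (x0 : ∀ s, V s) :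
    (∑ x ∈ Finset.univ.filter (fun x : ∀ s, V s => ∀ s : U, x s.1 = x0 s.1),
        marginal p W (W.restrict x))
      = marginal p D (D.restrict x0) := by
  classical
  unfold marginal
  rw [Finset.sum_filter, Finset.sum_filter]
  have inner : ∀ x' : ∀ s, V s,
      (∑ x : ∀ s, V s, if (∀ s : U, x s.1 = x0 s.1) then
          (if (∀ s : W, x' s.1 = W.restrict x s) then p x' else 0) else 0)
      = if (∀ s : D, x' s.1 = D.restrict x0 s) then p x' else 0 := by
    intro x'
    by_cases hR : ∀ s : D, x' s.1 = D.restrict x0 s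
    · rw [if_pos hR]
      set w : ∀ s, V s := fun s => if s ∈ U then x0 s else x' s with hw
      have hPw : ∀ s : U, w s.1 = x0 s.1 := fun s => by simp [hw, s.2]
      have hQw : ∀ s : W, x' s.1 = W.restrict w s := by
        intro s
        by_cases hsU : s.1 ∈ U
        · have hsD : s.1 ∈ D := (hD s.1).mpr ⟨hsU, s.2⟩
          have := hR ⟨s.1, hsD⟩
          simp only [Finset.restrict] at this ⊢
          simp [hw, hsU, this]
        · simp [Finset.restrict, hw, hsU]
      rw [Finset.sum_eq_single_of_mem w (Finset.mem_univ w)]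
      · rw [if_pos hPw, if_pos hQw]
      · intro b _ hb
        split_ifs with h1 h2
        · exfalso; apply hb; funext s
          rcases hUW s with hs | hs
          · rw [h1 ⟨s, hs⟩]; simp [hw, hs]
          · by_cases hsU : s ∈ U
            · rw [h1 ⟨s, hsU⟩]; simp [hw, hsU]
            · have := h2 ⟨s, hs⟩
              simp only [Finset.restrict] at this
              simp [hw, hsU, ← this]
        · rfl
        · rfl
    · rw [if_neg hR]
      refine Finset.sum_eq_zero fun x _ => ?_
      split_ifs with h1 h2
      · exfalso; apply hR; intro s
        have hs := (hD s.1).mp s.2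
        have e1 := h1 ⟨s.1, hs.1⟩
        have e2 := h2 ⟨s.1, hs.2⟩
        simp only [Finset.restrict] at e1 e2 ⊢
        rw [e2, e1]
      · rfl
      · rfl
  calc (∑ x : ∀ s, V s, if (∀ s : U, x s.1 = x0 s.1) then
          (∑ x' ∈ Finset.univ.filter (fun x' : ∀ s, V s => ∀ s : W, x' s.1 = W.restrict x s), p x') else 0)
      = ∑ x : ∀ s, V s, ∑ x' : ∀ s, V s, if (∀ s : U, x s.1 = x0 s.1) then
          (if (∀ s : W, x' s.1 = W.restrict x s) then p x' else 0) else 0 := by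
        refine Finset.sum_congr rfl fun x _ => ?_
        split_ifs with h
        · rw [Finset.sum_filter]
        · simp
    _ = ∑ x' : ∀ s, V s, ∑ x : ∀ s, V s, if (∀ s : U, x s.1 = x0 s.1) then
          (if (∀ s : W, x' s.1 = W.restrict x s) then p x' else 0) else 0 := Finset.sum_comm
    _ = ∑ x' : ∀ s, V s, if (∀ s : D, x' s.1 = D.restrict x0 s) then p x' else 0 :=
        Finset.sum_congr rfl fun x' _ => inner x'

lemma gibbs_pos {C : Finset (Finset S)} {p : (∀ s, V s) → ℝ}
    (hp : IsGibbsDistribution C p) : ∀ x, 0 < p x := by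
  obtain ⟨E, Z, hZ, -, hform, -⟩ := hp
  intro x; rw [hform x]; positivity

lemma gibbs_factor (C : Finset (Finset S)) (q A : Finset S)
    (hsub : ∀ c ∈ C, (c ∩ q).Nonempty → c ⊆ A)
    (p : (∀ s, V s) → ℝ) (hp : IsGibbsDistribution C p) :
    ∃ f g : (∀ s, V s) → ℝ, DependsOnlyOn A f ∧ DependsOnlyOn (Finset.univ \ q) g ∧
      ∀ x, Real.log (p x) = f x + g x := by
  classical
  obtain ⟨E, Z, hZ, hdep, hform, -⟩ := hp
  refine ⟨fun x => -∑ c ∈ C.filter (fun c => (c ∩ q).Nonempty), E c x,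
    fun x => (-∑ c ∈ C.filter (fun c => ¬(c ∩ q).Nonempty), E c x) - Real.log Z, ?_, ?_, ?_⟩
  · intro x y hxy
    simp only [neg_inj]
    refine Finset.sum_congr rfl fun c hc => ?_
    rw [Finset.mem_filter] at hc
    exact hdep c hc.1 x y fun s hs => hxy s (hsub c hc.1 hc.2 hs)
  · intro x y hxy
    have h : ∀ c ∈ C.filter (fun c => ¬(c ∩ q).Nonempty), E c x = E c y := by
      intro c hc
      rw [Finset.mem_filter] at hc
      refine hdep c hc.1 x y fun s hs => hxy s ?_
      rw [Finset.mem_sdiff]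
      exact ⟨Finset.mem_univ s, fun hsq => hc.2 ⟨s, Finset.mem_inter.mpr ⟨hs, hsq⟩⟩⟩
    simp only [sub_left_inj, neg_inj]
    exact Finset.sum_congr rfl h
  · intro x
    rw [hform x, Real.log_mul (by positivity) (Real.exp_pos _).ne', Real.log_exp,
      one_div, Real.log_inv,
      ← Finset.sum_filter_add_sum_filter_not C (fun c => (c ∩ q).Nonempty) (fun c => E c x)]
    ring

lemma gibbs_key (pi ri : ℝ) (hp : 0 < pi) (hr : 0 < ri) :
    pi * Real.log ri - pi * Real.log pi ≤ ri - pi := by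
  have h1 : Real.log (ri / pi) ≤ ri / pi - 1 := Real.log_le_sub_one_of_pos (div_pos hr hp)
  have h2 : Real.log (ri / pi) = Real.log ri - Real.log pi := Real.log_div hr.ne' hp.ne'
  have h3 := mul_le_mul_of_nonneg_left h1 hp.le
  rw [h2] at h3
  have h4 : pi * (ri / pi - 1) = ri - pi := by
    rw [mul_sub, mul_one, ← mul_div_assoc, mul_div_cancel_left₀ _ hp.ne']
  nlinarith [h3]

lemma gibbs_ineq {ι : Type*} [Fintype ι] (p r : ι → ℝ) (hp : ∀ i, 0 ≤ p i)
    (hr : ∀ i, 0 < r i) (hps : ∑ i, p i = 1) (hrs : ∑ i, r i = 1) :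
    ∑ i, p i * Real.log (r i) ≤ ∑ i, p i * Real.log (p i) := by
  have key : ∀ i : ι, p i * Real.log (r i) - p i * Real.log (p i) ≤ r i - p i := by
    intro i
    rcases eq_or_lt_of_le (hp i) with h | h
    · rw [← h]; simpa using (hr i).le
    · exact gibbs_key _ _ h (hr i)
  have hsum := Finset.sum_le_sum (fun i (_ : i ∈ Finset.univ) => key i)
  rw [Finset.sum_sub_distrib, Finset.sum_sub_distrib, hps, hrs] at hsum
  linarith

lemma gibbs_eq_case {ι : Type*} [Fintype ι] (p r : ι → ℝ) (hp : ∀ i, 0 < p i)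
    (hr : ∀ i, 0 < r i) (hps : ∑ i, p i = 1) (hrs : ∑ i, r i = 1)
    (heq : ∑ i, p i * Real.log (p i) ≤ ∑ i, p i * Real.log (r i)) : ∀ i, r i = p i := by
  have key : ∀ i : ι, p i * Real.log (r i) - p i * Real.log (p i) ≤ r i - p i :=
    fun i => gibbs_key _ _ (hp i) (hr i)
  have hsum := Finset.sum_le_sum (fun i (_ : i ∈ Finset.univ) => key i)
  rw [Finset.sum_sub_distrib, Finset.sum_sub_distrib, hps, hrs] at hsum
  have hzero : ∀ i ∈ Finset.univ,
      (r i - p i) - (p i * Real.log (r i) - p i * Real.log (p i)) = 0 := by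
    rw [← Finset.sum_eq_zero_iff_of_nonneg (fun i _ => by linarith [key i])]
    rw [Finset.sum_sub_distrib, Finset.sum_sub_distrib, Finset.sum_sub_distrib, hps, hrs]
    linarith
  intro i
  by_contra hne
  have hne' : r i / p i ≠ 1 := by
    intro h
    rw [div_eq_one_iff_eq (hp i).ne'] at h
    exact hne h
  have h1 : Real.log (r i / p i) < r i / p i - 1 :=
    Real.log_lt_sub_one_of_pos (div_pos (hr i) (hp i)) hne'
  have h2 : Real.log (r i / p i) = Real.log (r i) - Real.log (p i) :=
    Real.log_div (hr i).ne' (hp i).ne'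
  have h3 := mul_lt_mul_of_pos_left h1 (hp i)
  rw [h2] at h3
  have h4 : p i * (r i / p i - 1) = r i - p i := by
    rw [mul_sub, mul_one, ← mul_div_assoc, mul_div_cancel_left₀ _ (hp i).ne']
  have h5 := hzero i (Finset.mem_univ i)
  nlinarith [h3]

end Aux

/-- **Maximum likelihood estimation and marginalization commute (Theorem 2).**
Suppose the explicit estimate `p̂` belongs to the family `F` of positive Gibbs
distributions over `C`, and `p* ∈ F` maximizes the expected log-likelihood
`p ↦ Σ_x p̃(x) log p(x)` over `F`. Then the marginal of `p*` on `A = A_q` equals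
`p̃_A`, which lies in the family `{ r_A : r ∈ F }` of marginals of members of `F`
and is itself a maximum likelihood estimate for `p̃_A` in that family. -/
theorem ml_and_marginalization_commute
    {S : Type*} [Fintype S] [DecidableEq S] {V : S → Type*}
    [∀ s, Fintype (V s)] [∀ s, DecidableEq (V s)]
    (C : Finset (Finset S)) (hC : ∀ c ∈ C, c.Nonempty)
    (q : Finset S) (hq : q ∈ C)
    (A : Finset S) (hA : A = (C.filter fun c => (c ∩ q).Nonempty).biUnion id)
    (ptilde : (∀ s, V s) → ℝ)
    (hpt_nonneg : ∀ x, 0 ≤ ptilde x) (hpt_sum : ∑ x, ptilde x = 1)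
    (hpos : ∀ z : ∀ s : (A \ q : Finset S), V s, 0 < marginal ptilde (A \ q) z)
    (phat : (∀ s, V s) → ℝ)
    (hphat : ∀ x, phat x =
      marginal ptilde A (A.restrict x) *
        marginal ptilde (Finset.univ \ q) ((Finset.univ \ q).restrict x) /
        marginal ptilde (A \ q) ((A \ q).restrict x))
    (hphatF : IsGibbsDistribution C phat)
    (pstar : (∀ s, V s) → ℝ)
    (hstar : IsGibbsDistribution C pstar)
    (hmax : ∀ p : (∀ s, V s) → ℝ, IsGibbsDistribution C p →
      ∑ x, ptilde x * Real.log (p x) ≤ ∑ x, ptilde x * Real.log (pstar x)) :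
    (∀ y : ∀ s : A, V s, marginal pstar A y = marginal ptilde A y) ∧
    marginal ptilde A ∈
      {g : (∀ s : A, V s) → ℝ | ∃ r, IsGibbsDistribution C r ∧ g = marginal r A} ∧
    ∀ r : (∀ s, V s) → ℝ, IsGibbsDistribution C r →
      ∑ y : ∀ s : A, V s, marginal ptilde A y * Real.log (marginal r A y) ≤
        ∑ y : ∀ s : A, V s, marginal ptilde A y * Real.log (marginal ptilde A y) := by
  classical
  have hXne : Nonempty (∀ s, V s) := by
    by_contra h
    haveI : IsEmpty (∀ s, V s) := not_nonempty_iff.mp h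
    rw [Finset.univ_eq_empty, Finset.sum_empty] at hpt_sum
    norm_num at hpt_sum
  obtain ⟨x00⟩ := hXne
  haveI : ∀ s, Nonempty (V s) := fun s => ⟨x00 s⟩
  have hqA : q ⊆ A := by
    rw [hA]
    exact Finset.subset_biUnion_of_mem id
      (Finset.mem_filter.mpr ⟨hq, by rw [Finset.inter_self]; exact hC q hq⟩)
  have hsub : ∀ c ∈ C, (c ∩ q).Nonempty → c ⊆ A := by
    intro c hc hne
    rw [hA]
    exact Finset.subset_biUnion_of_mem id (Finset.mem_filter.mpr ⟨hc, hne⟩)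
  have hABu : ∀ s, s ∈ A ∨ s ∈ (Finset.univ \ q : Finset S) := by
    intro s
    by_cases hs : s ∈ q
    · exact Or.inl (hqA hs)
    · exact Or.inr (Finset.mem_sdiff.mpr ⟨Finset.mem_univ s, hs⟩)
  have hBAu : ∀ s, s ∈ (Finset.univ \ q : Finset S) ∨ s ∈ A := fun s => (hABu s).symm
  have hDint : ∀ s, s ∈ (A \ q : Finset S) ↔ s ∈ A ∧ s ∈ (Finset.univ \ q : Finset S) := by
    intro s; simp [Finset.mem_sdiff]
  have hDint' : ∀ s, s ∈ (A \ q : Finset S) ↔ s ∈ (Finset.univ \ q : Finset S) ∧ s ∈ A := by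
    intro s; simp [Finset.mem_sdiff, and_comm]
  -- marginal of phat on A equals marginal of ptilde on A
  have h1 : ∀ y : ∀ s : A, V s, marginal phat A y = marginal ptilde A y := by
    intro y
    have hyr : ∀ s : A, y s = extFun A y s.1 := fun s => (extFun_mem A y s.2).symm
    have hfilter : Finset.univ.filter (fun x : ∀ s, V s => ∀ s : A, x s.1 = y s)
        = Finset.univ.filter (fun x : ∀ s, V s => ∀ s : A, x s.1 = extFun A y s.1) := by
      apply Finset.filter_congr
      intro x _
      exact forall_congr' fun s => by rw [hyr s]
    have hstep : ∀ x ∈ Finset.univ.filter (fun x : ∀ s, V s => ∀ s : A, x s.1 = y s),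
        phat x = marginal ptilde A y / marginal ptilde (A \ q) ((A \ q).restrict (extFun A y))
          * marginal ptilde (Finset.univ \ q) ((Finset.univ \ q).restrict x) := by
      intro x hx
      rw [Finset.mem_filter] at hx
      have hxA : A.restrict x = y := funext fun s => hx.2 s
      have hxD : (A \ q).restrict x = (A \ q).restrict (extFun A y) := by
        funext s
        have hsA : (s : S) ∈ A := (Finset.mem_sdiff.mp s.2).1
        show x s.1 = extFun A y s.1
        rw [hx.2 ⟨s.1, hsA⟩]
        exact (extFun_mem A y hsA).symm
      rw [hphat x, hxA, hxD]
      ring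
    have hm0 : marginal phat A y
        = ∑ x ∈ Finset.univ.filter (fun x : ∀ s, V s => ∀ s : A, x s.1 = y s), phat x := rfl
    rw [hm0, Finset.sum_congr rfl hstep, ← Finset.mul_sum, hfilter,
      swapcollapse ptilde A (Finset.univ \ q) (A \ q) hABu hDint (extFun A y),
      div_mul_cancel₀ _ (hpos _).ne']
  -- marginal of phat on univ \ q equals marginal of ptilde on univ \ q
  have h2 : ∀ z : ∀ s : (Finset.univ \ q : Finset S), V s,
      marginal phat (Finset.univ \ q) z = marginal ptilde (Finset.univ \ q) z := by
    intro z
    have hyr : ∀ s : (Finset.univ \ q : Finset S), z s = extFun (Finset.univ \ q) z s.1 :=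
      fun s => (extFun_mem (Finset.univ \ q) z s.2).symm
    have hfilter : Finset.univ.filter
          (fun x : ∀ s, V s => ∀ s : (Finset.univ \ q : Finset S), x s.1 = z s)
        = Finset.univ.filter (fun x : ∀ s, V s => ∀ s : (Finset.univ \ q : Finset S),
            x s.1 = extFun (Finset.univ \ q) z s.1) := by
      apply Finset.filter_congr
      intro x _
      exact forall_congr' fun s => by rw [hyr s]
    have hstep : ∀ x ∈ Finset.univ.filter
        (fun x : ∀ s, V s => ∀ s : (Finset.univ \ q : Finset S), x s.1 = z s),
        phat x = marginal ptilde (Finset.univ \ q) z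
          / marginal ptilde (A \ q) ((A \ q).restrict (extFun (Finset.univ \ q) z))
          * marginal ptilde A (A.restrict x) := by
      intro x hx
      rw [Finset.mem_filter] at hx
      have hxB : (Finset.univ \ q).restrict x = z := funext fun s => hx.2 s
      have hxD : (A \ q).restrict x = (A \ q).restrict (extFun (Finset.univ \ q) z) := by
        funext s
        have hsB : (s : S) ∈ (Finset.univ \ q : Finset S) :=
          Finset.mem_sdiff.mpr ⟨Finset.mem_univ _, (Finset.mem_sdiff.mp s.2).2⟩
        show x s.1 = extFun (Finset.univ \ q) z s.1
        rw [hx.2 ⟨s.1, hsB⟩]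
        exact (extFun_mem (Finset.univ \ q) z hsB).symm
      rw [hphat x, hxB, hxD]
      ring
    have hm0 : marginal phat (Finset.univ \ q) z
        = ∑ x ∈ Finset.univ.filter
            (fun x : ∀ s, V s => ∀ s : (Finset.univ \ q : Finset S), x s.1 = z s), phat x := rfl
    rw [hm0, Finset.sum_congr rfl hstep, ← Finset.mul_sum, hfilter,
      swapcollapse ptilde (Finset.univ \ q) A (A \ q) hBAu hDint' (extFun (Finset.univ \ q) z),
      div_mul_cancel₀ _ (hpos _).ne']
  -- expected log-likelihood under ptilde equals that under phat, for Gibbs p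
  have key : ∀ p : (∀ s, V s) → ℝ, IsGibbsDistribution C p →
      ∑ x, ptilde x * Real.log (p x) = ∑ x, phat x * Real.log (p x) := by
    intro p hp
    obtain ⟨f, g, hf, hg, hfg⟩ := gibbs_factor C q A hsub p hp
    have e1 : ∑ x, ptilde x * Real.log (p x)
        = (∑ x, ptilde x * f x) + ∑ x, ptilde x * g x := by
      rw [← Finset.sum_add_distrib]
      exact Finset.sum_congr rfl fun x _ => by rw [hfg x, mul_add]
    have e2 : ∑ x, phat x * Real.log (p x)
        = (∑ x, phat x * f x) + ∑ x, phat x * g x := by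
      rw [← Finset.sum_add_distrib]
      exact Finset.sum_congr rfl fun x _ => by rw [hfg x, mul_add]
    rw [e1, e2,
      sum_mul_eq_of_marginal_eq ptilde phat A f (fun y => (h1 y).symm) hf,
      sum_mul_eq_of_marginal_eq ptilde phat (Finset.univ \ q) g (fun z => (h2 z).symm) hg]
  have hphat_pos : ∀ x, 0 < phat x := gibbs_pos hphatF
  have hstar_pos : ∀ x, 0 < pstar x := gibbs_pos hstar
  have hphat_sum : ∑ x, phat x = 1 := by obtain ⟨_, _, _, _, _, h⟩ := hphatF; exact h
  have hstar_sum : ∑ x, pstar x = 1 := by obtain ⟨_, _, _, _, _, h⟩ := hstar; exact h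
  have hPP : ∑ x, phat x * Real.log (phat x) ≤ ∑ x, phat x * Real.log (pstar x) := by
    have h := hmax phat hphatF
    rwa [key phat hphatF, key pstar hstar] at h
  have hps_eq : ∀ x, pstar x = phat x :=
    gibbs_eq_case phat pstar hphat_pos hstar_pos hphat_sum hstar_sum hPP
  refine ⟨?_, ?_, ?_⟩
  · intro y
    rw [show pstar = phat from funext hps_eq]
    exact h1 y
  · exact ⟨phat, hphatF, funext fun y => (h1 y).symm⟩
  · intro r hr
    have hr_pos : ∀ x, 0 < r x := gibbs_pos hr
    have hr_sum : ∑ x, r x = 1 := by obtain ⟨_, _, _, _, _, h⟩ := hr; exact h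
    refine gibbs_ineq _ _ (fun y => marginal_nonneg hpt_nonneg A y)
      (fun y => marginal_pos hr_pos A y) ?_ ?_
    · rw [sum_marginal]; exact hpt_sum
    · rw [sum_marginal]; exact hr_sum
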